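/- Let (X,d) be a proper geodesic metric space, φ : X → ℝ a Kantorovich potential, and γ a φ-Kantorovich geodesic with ℓ := ℓ(γ) > 0. Let z_ac : (0,1) → ℝ be locally absolutely continuous, and assume that for Lebesgue-a.e. t ∈ (0,1), both maps τ ↦ φ_τ(γ_t) and τ ↦ φ̄_τ(γ_t) have a second Peano derivative at τ = t equal to z_ac(t). Then for any r₀ ∈ (0,1), the function L(r) := exp(−(1/ℓ²)·∫_{r₀}^{r} z_ac(t) dt) is concave on (0,1). -/

import Mathlib

/-- `ψ` is pointwise the `c`-transform of `φ` for the cost `c = d²/2`: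
at every point `x`, `ψ x` is a genuine (finite) infimum of `d(x,y)²/2 - φ(y)` over `y`. -/
def IsCTransform {X : Type*} [MetricSpace X] (φ ψ : X → ℝ) : Prop :=
  ∀ x : X, IsGLB {v : ℝ | ∃ y : X, v = dist x y ^ 2 / 2 - φ y} (ψ x)

/-- `φ` is a Kantorovich potential with (real-valued) conjugate potential `φc`. -/
def IsKantorovichPair {X : Type*} [MetricSpace X] (φ φc : X → ℝ) : Prop :=
  IsCTransform φ φc ∧ IsCTransform φc φ

/-- A constant-speed geodesic parametrized on `[0,1]`. -/
def IsGeodesic {X : Type*} [MetricSpace X] (γ : ℝ → X) : Prop :=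
  ∀ s ∈ Set.Icc (0:ℝ) 1, ∀ t ∈ Set.Icc (0:ℝ) 1,
    dist (γ s) (γ t) = |s - t| * dist (γ 0) (γ 1)

/-- A `φ`-Kantorovich geodesic: a geodesic with `φ(γ₀) + φ^c(γ₁) = ℓ(γ)²/2`,
where `ℓ(γ) = d(γ₀,γ₁)`. -/
def IsKantorovichGeodesic {X : Type*} [MetricSpace X] (φ φc : X → ℝ) (γ : ℝ → X) : Prop :=
  IsGeodesic γ ∧ φ (γ 0) + φc (γ 1) = dist (γ 0) (γ 1) ^ 2 / 2

/-- A metric space is geodesic if every pair of points is joined by a geodesic. -/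
def IsGeodesicSpace (X : Type*) [MetricSpace X] : Prop :=
  ∀ x y : X, ∃ γ : ℝ → X, IsGeodesic γ ∧ γ 0 = x ∧ γ 1 = y

/-- The interpolating intermediate-time Kantorovich potential
`φ_t(x) = -inf_y (d(x,y)²/(2t) - φ(y))` for `t ≠ 0`, and `φ_0 = φ`. -/
noncomputable def interpPotential {X : Type*} [MetricSpace X] (φ : X → ℝ) (t : ℝ) (x : X) : ℝ :=
  if t = 0 then φ x
  else -sInf {v : ℝ | ∃ y : X, v = dist x y ^ 2 / (2 * t) - φ y}

/-- The time-reversed interpolating Kantorovich potential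
`φ̄_t(x) = inf_y (d(x,y)²/(2(1-t)) - φ^c(y))` for `t ≠ 1`, and `φ̄_1 = -φ^c`. -/
noncomputable def reversePotential {X : Type*} [MetricSpace X] (φc : X → ℝ) (t : ℝ) (x : X) : ℝ :=
  if t = 1 then -φc x
  else sInf {v : ℝ | ∃ y : X, v = dist x y ^ 2 / (2 * (1 - t)) - φc y}

/-- `g` has a second Peano derivative `q` at `τ₀`: it is differentiable at `τ₀` (with some
derivative `d`) and `g(τ₀+ε) = g(τ₀) + d·ε + q·ε²/2 + o(ε²)` as `ε → 0`. -/
def HasSecondPeanoDerivAt (g : ℝ → ℝ) (q : ℝ) (τ₀ : ℝ) : Prop :=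
  ∃ d : ℝ, HasDerivAt g d τ₀ ∧
    Asymptotics.IsLittleO (nhds (0 : ℝ))
      (fun ε : ℝ => g (τ₀ + ε) - g τ₀ - d * ε - q * ε ^ 2 / 2)
      (fun ε : ℝ => ε ^ 2)

open Set

section Aux
variable {X : Type*} [MetricSpace X] {φ φc : X → ℝ}

/-- basic convexity inequality -/
lemma aux_convsq {p q a b : ℝ} (ha : 0 < a) (hb : 0 < b) :
    (p+q)^2/(a+b) ≤ p^2/a + q^2/b := by
  rw [div_add_div _ _ (ne_of_gt ha) (ne_of_gt hb), div_le_div_iff₀ (by positivity) (by positivity)]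
  nlinarith [sq_nonneg (p*b - q*a), mul_pos ha hb]

lemma aux_phi_le (h : IsCTransform φc φ) (x y : X) : φ x ≤ dist x y ^ 2 / 2 - φc y :=
  (h x).1 ⟨y, rfl⟩

/-- the defining set of the interpolating potential is bounded below when `0 < τ ≤ 1`. -/
lemma aux_bddBelow (h : IsCTransform φc φ) (x : X) {τ : ℝ} (h0 : 0 < τ) (h1 : τ ≤ 1) :
    BddBelow {v : ℝ | ∃ y : X, v = dist x y ^ 2 / (2 * τ) - φ y} := by
  refine ⟨φc x, fun v hv => ?_⟩
  obtain ⟨y, rfl⟩ := hv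
  have h2 := aux_phi_le h y x
  have hd : 0 ≤ dist x y := dist_nonneg
  have : dist y x = dist x y := dist_comm y x
  have : dist x y ^ 2 / 2 ≤ dist x y ^ 2 / (2*τ) := by
    apply div_le_div_of_nonneg_left (by positivity) (by positivity) (by nlinarith)
  nlinarith [aux_phi_le h y x, dist_comm y x]

lemma aux_nonempty (x : X) {τ : ℝ} :
    Set.Nonempty {v : ℝ | ∃ y : X, v = dist x y ^ 2 / (2 * τ) - φ y} :=
  ⟨_, ⟨x, rfl⟩⟩

/-- semigroup (Hopf–Lax) inequality -/
lemma aux_semigroup (h : IsCTransform φc φ) (x x' : X) {τ' τ : ℝ}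
    (h0 : 0 < τ') (hlt : τ' < τ) (h1 : τ ≤ 1) :
    interpPotential φ τ' x' - dist x x' ^ 2 / (2 * (τ - τ')) ≤ interpPotential φ τ x := by
  have hτ : τ ≠ 0 := ne_of_gt (h0.trans hlt)
  have hτ' : τ' ≠ 0 := ne_of_gt h0
  simp only [interpPotential, if_neg hτ, if_neg hτ']
  have key : sInf {v : ℝ | ∃ y : X, v = dist x y ^ 2 / (2 * τ) - φ y}
      ≤ sInf {v : ℝ | ∃ y : X, v = dist x' y ^ 2 / (2 * τ') - φ y}
        + dist x x' ^ 2 / (2 * (τ - τ')) := by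
    rw [← sub_le_iff_le_add]
    apply le_csInf (aux_nonempty x')
    rintro v ⟨y, rfl⟩
    rw [sub_le_iff_le_add]
    have step : dist x y ^ 2 / (2 * τ) ≤ dist x' y ^ 2 / (2*τ') + dist x x' ^2 / (2*(τ - τ')) := by
      have htri : dist x y ≤ dist x x' + dist x' y := dist_triangle x x' y
      have h2 : dist x y ^ 2 ≤ (dist x x' + dist x' y) ^ 2 := by
        nlinarith [dist_nonneg (x := x) (y := y), dist_nonneg (x := x) (y := x'),
          dist_nonneg (x := x') (y := y)]
      have hD : (0:ℝ) < 2*(τ-τ') + 2*τ' := by linarith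
      calc dist x y ^ 2 / (2 * τ) = dist x y ^ 2 / (2*(τ-τ') + 2*τ') := by ring_nf
          _ ≤ (dist x x' + dist x' y) ^2 / (2*(τ-τ') + 2*τ') := (div_le_div_iff_of_pos_right hD).2 h2
          _ ≤ dist x x' ^ 2 / (2 * (τ - τ')) + dist x' y ^2 / (2 * τ') :=
            aux_convsq (by linarith) (by linarith)
          _ = dist x' y ^2 / (2*τ') + dist x x' ^ 2 / (2 * (τ - τ')) := by ring
    have mem := csInf_le (aux_bddBelow h x (by linarith) h1) ⟨y, rfl⟩
    linarith
  linarith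
end Aux


section Aux2
variable {X : Type*} [MetricSpace X] {φ φc : X → ℝ} {γ : ℝ → X}

lemma aux_geod_dist (hg : IsGeodesic γ) {s t : ℝ} (hs : s ∈ Icc (0:ℝ) 1)
    (ht : t ∈ Icc (0:ℝ) 1) (hst : s ≤ t) :
    dist (γ s) (γ t) = (t - s) * dist (γ 0) (γ 1) := by
  rw [hg s hs t ht, abs_of_nonpos (by linarith)]; ring

lemma aux_interp_ge (hT : IsCTransform φc φ) (hg : IsGeodesic γ)
    {t τ : ℝ} (ht : t ∈ Icc (0:ℝ) 1) (h0 : 0 < τ) (h1 : τ ≤ 1) :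
    φ (γ 0) - (t * dist (γ 0) (γ 1)) ^ 2 / (2 * τ) ≤ interpPotential φ τ (γ t) := by
  rw [interpPotential, if_neg (ne_of_gt h0)]
  have hmem : dist (γ t) (γ 0) ^ 2 / (2 * τ) - φ (γ 0)
      ∈ {v : ℝ | ∃ y : X, v = dist (γ t) y ^ 2 / (2 * τ) - φ y} := ⟨γ 0, rfl⟩
  have hle := csInf_le (aux_bddBelow hT (γ t) h0 h1) hmem
  have hd : dist (γ t) (γ 0) = t * dist (γ 0) (γ 1) := by
    rw [dist_comm, aux_geod_dist hg (by norm_num) ht ht.1]; ring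
  rw [hd] at hle
  linarith

lemma aux_interp_eq (hT : IsCTransform φc φ) (hg : IsGeodesic γ)
    (hdual : φ (γ 0) + φc (γ 1) = dist (γ 0) (γ 1) ^ 2 / 2)
    {t : ℝ} (ht : t ∈ Ioo (0:ℝ) 1) :
    interpPotential φ t (γ t) = φ (γ 0) - t * dist (γ 0) (γ 1) ^ 2 / 2 := by
  set l := dist (γ 0) (γ 1) with hl
  have h0 : (0:ℝ) < t := ht.1
  have h1 : t < 1 := ht.2
  have hIcc : t ∈ Icc (0:ℝ) 1 := ⟨le_of_lt h0, le_of_lt h1⟩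
  have hge := aux_interp_ge hT hg hIcc h0 (le_of_lt h1)
  have hle : interpPotential φ t (γ t) ≤ φ (γ 0) - t * l ^ 2 / 2 := by
    rw [interpPotential, if_neg (ne_of_gt h0)]
    have hsinf : -(φ (γ 0) - t * l ^ 2 / 2) ≤
        sInf {v : ℝ | ∃ y : X, v = dist (γ t) y ^ 2 / (2 * t) - φ y} := by
      apply le_csInf (aux_nonempty (γ t))
      rintro v ⟨y, rfl⟩
      have hφy := aux_phi_le hT y (γ 1)
      have htri : dist y (γ 1) ≤ dist (γ t) y + (1 - t) * l := by
        have h5 := dist_triangle y (γ t) (γ 1)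
        have hd : dist (γ t) (γ 1) = (1 - t) * l := aux_geod_dist hg hIcc (by norm_num) (le_of_lt h1)
        rw [hd] at h5; rw [dist_comm y (γ t)] at h5; linarith
      have hln : 0 ≤ l := dist_nonneg
      have hdn : 0 ≤ dist (γ t) y := dist_nonneg
      have hD1 : 0 ≤ dist y (γ 1) := dist_nonneg
      have h1' : (0:ℝ) < 1 - t := sub_pos.2 h1
      have hkey : t * l ^2 / 2 - φ (γ 0) + φ y ≤ dist (γ t) y ^ 2 / (2*t) := by
        rw [le_div_iff₀ (by positivity : (0:ℝ) < 2*t)]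
        nlinarith [mul_self_le_mul_self hD1 htri,
          mul_nonneg h1'.le (sq_nonneg (dist (γ t) y - t*l)), hφy, hdual]
      linarith
    linarith
  have : (t * l) ^ 2 / (2 * t) = t * l ^ 2 / 2 := by
    field_simp
  rw [this] at hge
  linarith

lemma aux_deriv_id (hT : IsCTransform φc φ) (hg : IsGeodesic γ)
    (hdual : φ (γ 0) + φc (γ 1) = dist (γ 0) (γ 1) ^ 2 / 2)
    {t d : ℝ} (ht : t ∈ Ioo (0:ℝ) 1)
    (hd : HasDerivAt (fun τ => interpPotential φ τ (γ t)) d t) :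
    d = dist (γ 0) (γ 1) ^ 2 / 2 := by
  set l := dist (γ 0) (γ 1) with hl
  have h0 : (0:ℝ) < t := ht.1
  have h1 : t < 1 := ht.2
  have hIcc : t ∈ Icc (0:ℝ) 1 := ⟨le_of_lt h0, le_of_lt h1⟩
  set G : ℝ → ℝ := fun τ => interpPotential φ τ (γ t) - φ (γ 0) + (t*l)^2 / (2*τ) with hG
  have hGd : HasDerivAt G (d + (t*l)^2/2 * (-(t^2)⁻¹)) t := by
    have h2 : HasDerivAt (fun τ : ℝ => (t*l)^2 / (2*τ)) ((t*l)^2/2 * (-(t^2)⁻¹)) t := by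
      have h3 : HasDerivAt (fun τ : ℝ => τ⁻¹) (-(t^2)⁻¹) t := hasDerivAt_inv (ne_of_gt h0)
      have h4 := h3.const_mul ((t*l)^2/2)
      convert h4 using 2 with τ
      · rfl
      · rfl
      · ring
    exact (hd.sub_const (φ (γ 0))).add h2
  have hmin : IsLocalMin G t := by
    have hev : ∀ᶠ τ in nhds t, τ ∈ Ioo (0:ℝ) 1 := (isOpen_Ioo).eventually_mem ht
    have hGt : G t = 0 := by
      rw [hG]; simp only
      rw [aux_interp_eq hT hg hdual ht]
      field_simp; ring
    rw [IsLocalMin, IsMinFilter, hGt]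
    filter_upwards [hev] with τ hτ
    have := aux_interp_ge hT hg hIcc hτ.1 (le_of_lt hτ.2)
    rw [hG]; simp only; linarith
  have := hmin.hasDerivAt_eq_zero hGd
  have ht2 : t^2 ≠ 0 := by positivity
  field_simp at this
  apply mul_right_cancel₀ (show (2*t^2 : ℝ) ≠ 0 by positivity)
  linear_combination t^2 * this

end Aux2


section Aux3
open Filter Asymptotics
variable {X : Type*} [MetricSpace X] {φ φc : X → ℝ} {γ : ℝ → X}

lemma aux_sq_bigO (lam : ℝ) : (fun σ : ℝ => (lam*σ)^2) =O[nhds 0] (fun σ : ℝ => σ^2) := by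
  exact ((Asymptotics.isBigO_refl (fun σ : ℝ => σ^2) (nhds 0)).const_mul_left
    (lam^2)).congr_left (fun σ => by ring)

lemma aux_peano_comp {g : ℝ → ℝ} {q t0 d lam : ℝ}
    (h : (fun ε : ℝ => g (t0 + ε) - g t0 - d * ε - q * ε ^ 2 / 2) =o[nhds 0] (fun ε : ℝ => ε^2)) :
    (fun σ : ℝ => g (t0 + lam*σ) - g t0 - d * (lam*σ) - q * (lam*σ) ^ 2 / 2)
      =o[nhds 0] (fun σ : ℝ => σ^2) := by
  have hten : Filter.Tendsto (fun σ : ℝ => lam*σ) (nhds 0) (nhds 0) := by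
    have : Continuous (fun σ : ℝ => lam*σ) := by continuity
    simpa using this.tendsto' 0 0 (by norm_num)
  exact (h.comp_tendsto hten).trans_isBigO (aux_sq_bigO lam)

lemma aux_key {l h zt zs lam mu t0 s0 : ℝ} {P Q : ℝ → ℝ}
    (hh : 0 < h)
    (hoP : (fun ε : ℝ => P (t0+ε) - P t0 - l^2/2 * ε - zt * ε^2/2) =o[nhds 0]
      (fun ε : ℝ => ε^2))
    (hoQ : (fun ε : ℝ => Q (s0+ε) - Q s0 - l^2/2 * ε - zs * ε^2/2) =o[nhds 0]
      (fun ε : ℝ => ε^2))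
    (hval : P t0 - Q s0 = -(h*l^2)/2)
    (hsg : ∀ᶠ σ in nhds (0:ℝ),
      0 ≤ P (t0+lam*σ) - Q (s0+mu*σ) + h^2*l^2/(2*(h+(lam-mu)*σ))) :
    0 ≤ zt * lam^2 - zs * mu^2 + l^2*(lam-mu)^2/h := by
  have hEt := aux_peano_comp (lam := lam) hoP
  have hEs := aux_peano_comp (lam := mu) hoQ
  have hden : Filter.Tendsto (fun σ : ℝ => h + (lam-mu)*σ) (nhds 0) (nhds h) :=
    (by continuity : Continuous fun σ : ℝ => h + (lam-mu)*σ).tendsto' 0 h (by norm_num)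
  have hevd : ∀ᶠ σ in nhds (0:ℝ), h/2 < h + (lam-mu)*σ :=
    hden.eventually_const_lt (by linarith)
  -- cubic piece
  have hucont : Filter.Tendsto
      (fun σ : ℝ => -((lam-mu)^3*l^2*σ)/(2*h*(h + (lam-mu)*σ))) (nhds 0) (nhds 0) := by
    have hca : ContinuousAt
        (fun σ : ℝ => -((lam-mu)^3*l^2*σ)/(2*h*(h + (lam-mu)*σ))) 0 := by
      apply ContinuousAt.div
      · fun_prop
      · fun_prop
      · show 2*h*(h + (lam-mu)*0) ≠ 0
        simp only [mul_zero, add_zero]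
        positivity
    have h0 : -((lam-mu)^3*l^2*(0:ℝ))/(2*h*(h + (lam-mu)*0)) = 0 := by norm_num
    simpa [h0] using hca.tendsto
  have hcub : (fun σ : ℝ => σ^2 * (-((lam-mu)^3*l^2*σ)/(2*h*(h + (lam-mu)*σ))))
      =o[nhds (0:ℝ)] (fun σ => σ^2) := by
    rw [Asymptotics.isLittleO_iff]
    intro C hC
    filter_upwards [hucont.eventually (Metric.ball_mem_nhds 0 hC)] with σ hσ
    have habs : |(-((lam-mu)^3*l^2*σ)/(2*h*(h + (lam-mu)*σ)))| ≤ C := by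
      have := mem_ball_iff_norm.1 hσ
      simp only [sub_zero, Real.norm_eq_abs] at this
      linarith
    calc ‖σ^2 * (-((lam-mu)^3*l^2*σ)/(2*h*(h + (lam-mu)*σ)))‖
        = ‖σ^2‖ * |(-((lam-mu)^3*l^2*σ)/(2*h*(h + (lam-mu)*σ)))| := by rw [norm_mul]; rfl
      _ ≤ ‖σ^2‖ * C := mul_le_mul_of_nonneg_left habs (norm_nonneg _)
      _ = C * ‖σ^2‖ := by ring
  -- the identity
  have hident : ∀ᶠ σ in nhds (0:ℝ),
      ((P (t0+lam*σ) - P t0 - l^2/2 * (lam*σ) - zt * (lam*σ)^2/2)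
        - (Q (s0+mu*σ) - Q s0 - l^2/2 * (mu*σ) - zs * (mu*σ)^2/2))
        + σ^2 * (-((lam-mu)^3*l^2*σ)/(2*h*(h + (lam-mu)*σ))) =
      (P (t0+lam*σ) - Q (s0+mu*σ) + h^2*l^2/(2*(h+(lam-mu)*σ)))
        - (zt * lam^2 - zs * mu^2 + l^2*(lam-mu)^2/h)*σ^2/2 := by
    filter_upwards [hevd] with σ h4
    have hne : h + (lam-mu)*σ ≠ 0 := ne_of_gt (by linarith)
    have hval' : P t0 = Q s0 - h*l^2/2 := by linarith
    rw [hval']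
    obtain ⟨D, hD⟩ : ∃ D, D = h + (lam-mu)*σ := ⟨_, rfl⟩
    rw [← hD] at hne ⊢
    have hh0 : h ≠ 0 := hh.ne'
    field_simp
    rw [hD]
    ring
  have hlo : (fun σ : ℝ => (P (t0+lam*σ) - Q (s0+mu*σ) + h^2*l^2/(2*(h+(lam-mu)*σ)))
      - (zt * lam^2 - zs * mu^2 + l^2*(lam-mu)^2/h)*σ^2/2)
      =o[nhds (0:ℝ)] (fun σ => σ^2) :=
    Asymptotics.IsLittleO.congr' ((hEt.sub hEs).add hcub) hident Filter.EventuallyEq.rfl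
  -- conclude
  by_contra hKc
  push_neg at hKc
  have hK4 : 0 < -(zt * lam^2 - zs * mu^2 + l^2*(lam-mu)^2/h)/4 := by
    rw [neg_div]
    exact neg_pos.2 (div_neg_of_neg_of_pos hKc (by norm_num))
  have hsm := Asymptotics.isLittleO_iff.1 hlo hK4
  have hfin : ∀ᶠ σ in nhdsWithin (0:ℝ) {(0:ℝ)}ᶜ, False := by
    have h1 := nhdsWithin_le_nhds (s := {(0:ℝ)}ᶜ) hsg
    have h2 := nhdsWithin_le_nhds (s := {(0:ℝ)}ᶜ) hsm
    have h3 : ∀ᶠ σ in nhdsWithin (0:ℝ) {(0:ℝ)}ᶜ, σ ≠ 0 :=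
      eventually_mem_nhdsWithin.mono (fun σ hσ => hσ)
    filter_upwards [h1, h2, h3] with σ hσ1 hσ2 hσ3
    have hσp : 0 < σ^2 := pow_two_pos_of_ne_zero hσ3
    rw [Real.norm_eq_abs, Real.norm_eq_abs, abs_of_pos hσp] at hσ2
    have hle := (abs_le.1 hσ2).2
    nlinarith [hle, hσ1, mul_pos (neg_pos.2 hKc) hσp]
  obtain ⟨σ, hσ⟩ := hfin.exists
  exact hσ

lemma aux_quadratic (hT : IsCTransform φc φ) (hg : IsGeodesic γ)
    (hdual : φ (γ 0) + φc (γ 1) = dist (γ 0) (γ 1) ^ 2 / 2)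
    {s t zs zt : ℝ} (hs : s ∈ Ioo (0:ℝ) 1) (ht : t ∈ Ioo (0:ℝ) 1) (hst : s < t)
    (hps : HasSecondPeanoDerivAt (fun τ => interpPotential φ τ (γ s)) zs s)
    (hpt : HasSecondPeanoDerivAt (fun τ => interpPotential φ τ (γ t)) zt t)
    (lam mu : ℝ) :
    0 ≤ zt * lam^2 - zs * mu^2 + dist (γ 0) (γ 1)^2 * (lam - mu)^2 / (t - s) := by
  obtain ⟨dt, hdt, hot⟩ := hpt
  obtain ⟨ds, hds, hos⟩ := hps
  rw [aux_deriv_id hT hg hdual ht hdt] at hot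
  rw [aux_deriv_id hT hg hdual hs hds] at hos
  have hh : 0 < t - s := sub_pos.2 hst
  have hval : interpPotential φ t (γ t) - interpPotential φ s (γ s)
      = -((t-s) * dist (γ 0) (γ 1)^2)/2 := by
    rw [aux_interp_eq hT hg hdual ht, aux_interp_eq hT hg hdual hs]
    ring
  have hsg : ∀ᶠ σ in nhds (0:ℝ),
      0 ≤ interpPotential φ (t+lam*σ) (γ t) - interpPotential φ (s+mu*σ) (γ s)
        + (t-s)^2 * dist (γ 0) (γ 1)^2 / (2*((t-s)+(lam-mu)*σ)) := by
    have c1 : Filter.Tendsto (fun σ : ℝ => s + mu*σ) (nhds 0) (nhds s) :=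
      (by continuity : Continuous fun σ : ℝ => s + mu*σ).tendsto' 0 s (by norm_num)
    have c2 : Filter.Tendsto (fun σ : ℝ => t + lam*σ) (nhds 0) (nhds t) :=
      (by continuity : Continuous fun σ : ℝ => t + lam*σ).tendsto' 0 t (by norm_num)
    filter_upwards [c1.eventually_const_lt hs.1, c1.eventually_lt c2 hst,
      c2.eventually_lt_const ht.2] with σ h1 h2 h3
    have hsgr := aux_semigroup (φc := φc) hT (γ t) (γ s) h1 h2 (le_of_lt h3)
    have hd : dist (γ t) (γ s) = (t-s) * dist (γ 0) (γ 1) := by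
      rw [dist_comm, aux_geod_dist hg ⟨hs.1.le, hs.2.le⟩ ⟨ht.1.le, ht.2.le⟩ hst.le]
    rw [hd] at hsgr
    have he : ((t-s) * dist (γ 0) (γ 1))^2 / (2*(t + lam*σ - (s + mu*σ)))
        = (t-s)^2 * dist (γ 0) (γ 1)^2 / (2*((t-s)+(lam-mu)*σ)) := by
      rw [mul_pow]; ring_nf
    rw [he] at hsgr
    linarith
  have := aux_key (l := dist (γ 0) (γ 1)) (h := t - s)
    (P := fun τ => interpPotential φ τ (γ t)) (Q := fun τ => interpPotential φ τ (γ s))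
    (t0 := t) (s0 := s) (lam := lam) (mu := mu) (zt := zt) (zs := zs)
    hh hot hos (by simpa using hval) (by simpa using hsg)
  linarith [this]

end Aux3

section Aux4
variable {X : Type*} [MetricSpace X] {φ φc : X → ℝ} {γ : ℝ → X}

lemma aux_zub (hT : IsCTransform φc φ) (hg : IsGeodesic γ)
    (hdual : φ (γ 0) + φc (γ 1) = dist (γ 0) (γ 1) ^ 2 / 2)
    {s t zs zt : ℝ} (hs : s ∈ Ioo (0:ℝ) 1) (ht : t ∈ Ioo (0:ℝ) 1) (hst : s < t)
    (hps : HasSecondPeanoDerivAt (fun τ => interpPotential φ τ (γ s)) zs s)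
    (hpt : HasSecondPeanoDerivAt (fun τ => interpPotential φ τ (γ t)) zt t) :
    zs * (t - s) ≤ dist (γ 0) (γ 1)^2 ∧ -(dist (γ 0) (γ 1)^2) ≤ zt * (t - s) := by
  have hh : 0 < t - s := sub_pos.2 hst
  constructor
  · have hq := aux_quadratic hT hg hdual hs ht hst hps hpt 0 1
    have e : dist (γ 0) (γ 1)^2 * ((0:ℝ) - 1)^2/(t-s) = dist (γ 0) (γ 1)^2/(t-s) := by
      norm_num
    rw [e] at hq
    have := (le_div_iff₀ hh).1 (by linarith : zs ≤ dist (γ 0) (γ 1)^2/(t-s))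
    linarith
  · have hq := aux_quadratic hT hg hdual hs ht hst hps hpt 1 0
    have e : dist (γ 0) (γ 1)^2 * ((1:ℝ) - 0)^2/(t-s) = dist (γ 0) (γ 1)^2/(t-s) := by
      norm_num
    rw [e] at hq
    have := (le_div_iff₀ hh).1 (by linarith : -zt ≤ dist (γ 0) (γ 1)^2/(t-s))
    linarith

lemma aux_riccati (hT : IsCTransform φc φ) (hg : IsGeodesic γ)
    (hdual : φ (γ 0) + φc (γ 1) = dist (γ 0) (γ 1) ^ 2 / 2)
    (hl : 0 < dist (γ 0) (γ 1))
    {s t zs zt : ℝ} (hs : s ∈ Ioo (0:ℝ) 1) (ht : t ∈ Ioo (0:ℝ) 1) (hst : s < t)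
    (hps : HasSecondPeanoDerivAt (fun τ => interpPotential φ τ (γ s)) zs s)
    (hpt : HasSecondPeanoDerivAt (fun τ => interpPotential φ τ (γ t)) zt t) :
    zs * zt * (t - s) ≤ dist (γ 0) (γ 1)^2 * (zt - zs) := by
  have hh : 0 < t - s := sub_pos.2 hst
  have hl2 : 0 < dist (γ 0) (γ 1)^2 := by positivity
  set cc := dist (γ 0) (γ 1)^2 / (t - s) with hccdef
  have hcc : 0 < cc := div_pos hl2 hh
  have hcch : cc * (t - s) = dist (γ 0) (γ 1)^2 := div_mul_cancel₀ _ (ne_of_gt hh)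
  -- strict positivity of zt + cc
  have hq0 := aux_quadratic hT hg hdual hs ht hst hps hpt 1 0
  have e0 : dist (γ 0) (γ 1)^2 * ((1:ℝ) - 0)^2/(t-s) = cc := by rw [hccdef]; norm_num
  rw [e0] at hq0
  have hpos : 0 < zt + cc := by
    rcases lt_or_eq_of_le (by linarith : 0 ≤ zt + cc) with h | h
    · exact h
    · exfalso
      have hzt : zt = -cc := by linarith
      have hq1 := aux_quadratic hT hg hdual hs ht hst hps hpt ((cc - zs + 1)/(2*cc)) 1
      set lam := (cc - zs + 1)/(2*cc) with hlamdef
      have e1 : dist (γ 0) (γ 1)^2 * (lam - 1)^2/(t-s) = cc * (lam - 1)^2 := by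
        rw [hccdef]; ring
      rw [e1, hzt] at hq1
      have e2 : 2*cc*lam = cc - zs + 1 := by
        rw [hlamdef]; field_simp
      nlinarith [hq1, e2]
  -- main quadratic choice
  have hq := aux_quadratic hT hg hdual hs ht hst hps hpt cc (zt + cc)
  have e3 : dist (γ 0) (γ 1)^2 * (cc - (zt + cc))^2/(t-s) = cc * zt^2 := by
    rw [hccdef]; ring
  rw [e3] at hq
  have key : 0 ≤ (zt + cc) * (cc*(zt - zs) - zs*zt) := by nlinarith [hq]
  have key2 : 0 ≤ cc*(zt - zs) - zs*zt := by
    by_contra hcon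
    push_neg at hcon
    nlinarith [mul_pos hpos (neg_pos.2 hcon)]
  have e4 : (t-s)*(cc*(zt - zs) - zs*zt)
      = dist (γ 0) (γ 1)^2*(zt - zs) - zs*zt*(t-s) := by
    rw [← hcch]; ring
  nlinarith [mul_nonneg hh.le key2, e4]

end Aux4

section Aux5
open MeasureTheory Filter

lemma aux_zcont {zac g : ℝ → ℝ}
    (hgint : ∀ x ∈ Ioo (0:ℝ) 1, ∀ y ∈ Ioo (0:ℝ) 1, IntervalIntegrable g volume x y)
    (hrep : ∀ x ∈ Ioo (0:ℝ) 1, ∀ y ∈ Ioo (0:ℝ) 1, zac y = zac x + ∫ u in x..y, g u) :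
    ContinuousOn zac (Ioo (0:ℝ) 1) := by
  intro y hy
  apply ContinuousAt.continuousWithinAt
  have hy0 : (0:ℝ) < y := hy.1
  have hy1 : y < 1 := hy.2
  have ha : y/2 ∈ Ioo (0:ℝ) 1 := ⟨by linarith, by linarith⟩
  have hb : (y+1)/2 ∈ Ioo (0:ℝ) 1 := ⟨by linarith, by linarith⟩
  have hab : y/2 ≤ (y+1)/2 := by linarith
  have huIcc : uIcc (y/2) ((y+1)/2) = Icc (y/2) ((y+1)/2) := uIcc_of_le hab
  have hsub : uIcc (y/2) ((y+1)/2) ⊆ Ioo (0:ℝ) 1 := by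
    rw [huIcc]
    intro x hx
    exact ⟨lt_of_lt_of_le ha.1 hx.1, lt_of_le_of_lt hx.2 hb.2⟩
  have hint : IntegrableOn g (uIcc (y/2) ((y+1)/2)) volume := by
    rw [huIcc]
    exact (intervalIntegrable_iff_integrableOn_Icc_of_le hab).1 (hgint _ ha _ hb)
  have hcont := intervalIntegral.continuousOn_primitive_interval hint
  have heq : EqOn zac (fun x => zac (y/2) + ∫ u in (y/2)..x, g u) (uIcc (y/2) ((y+1)/2)) :=
    fun x hx => hrep _ ha x (hsub hx)
  have hcont2 : ContinuousOn zac (uIcc (y/2) ((y+1)/2)) :=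
    (continuousOn_const.add hcont).congr heq
  apply hcont2.continuousAt
  rw [huIcc]
  exact Icc_mem_nhds (by linarith) (by linarith)

lemma aux_dense {P : ℝ → Prop}
    (hae : ∀ᵐ t ∂(volume.restrict (Ioo (0:ℝ) 1)), P t) (a b : ℝ)
    (ha : 0 ≤ a) (hab : a < b) (hb : b ≤ 1) :
    ∃ x, x ∈ Ioo a b ∧ (x ∈ Ioo (0:ℝ) 1 ∧ P x) := by
  have h1 : ∀ᵐ t ∂(volume : Measure ℝ), t ∈ Ioo (0:ℝ) 1 → P t :=
    (ae_restrict_iff' measurableSet_Ioo).1 hae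
  rw [MeasureTheory.ae_iff] at h1
  have h2 : volume (Ioo a b \ {t : ℝ | ¬(t ∈ Ioo (0:ℝ) 1 → P t)}) = volume (Ioo a b) :=
    measure_diff_null h1
  have h3 : volume (Ioo a b) ≠ 0 := by
    rw [Real.volume_Ioo]
    simp only [ne_eq, ENNReal.ofReal_eq_zero, not_le]
    linarith
  have h4 : (Ioo a b \ {t : ℝ | ¬(t ∈ Ioo (0:ℝ) 1 → P t)}).Nonempty :=
    MeasureTheory.nonempty_of_measure_ne_zero (h2 ▸ h3)
  obtain ⟨x, hx1, hx2⟩ := h4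
  have hxI : x ∈ Ioo (0:ℝ) 1 := ⟨lt_of_le_of_lt ha hx1.1, lt_of_lt_of_le hx1.2 hb⟩
  simp only [mem_setOf_eq, not_not] at hx2
  exact ⟨x, hx1, hxI, hx2 hxI⟩

lemma aux_allpairs {G : Set ℝ} {zac : ℝ → ℝ} {l2 : ℝ}
    (hdense : ∀ a b : ℝ, 0 ≤ a → a < b → b ≤ 1 → ∃ x, x ∈ Ioo a b ∧ x ∈ G)
    (hzcont : ContinuousOn zac (Ioo (0:ℝ) 1))
    (hG : G ⊆ Ioo (0:ℝ) 1)
    (hpair : ∀ s ∈ G, ∀ t ∈ G, s < t →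
      zac s * (t - s) ≤ l2 ∧ -l2 ≤ zac t * (t - s)
        ∧ zac s * zac t * (t-s) ≤ l2*(zac t - zac s)) :
    ∀ s ∈ Ioo (0:ℝ) 1, ∀ t ∈ Ioo (0:ℝ) 1, s < t →
      zac s * (t - s) ≤ l2 ∧ -l2 ≤ zac t * (t - s)
        ∧ zac s * zac t * (t-s) ≤ l2*(zac t - zac s) := by
  intro s hs t ht hst
  have hεs : ∀ n : ℕ, (0:ℝ) < min (1/(n+1 : ℝ)) (s/2) := fun n => by
    apply lt_min (by positivity) (by linarith [hs.1])
  have hεt : ∀ n : ℕ, (0:ℝ) < min (1/(n+1 : ℝ)) ((1-t)/2) := fun n => by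
    apply lt_min (by positivity) (by linarith [ht.2])
  have hsex : ∀ n : ℕ, ∃ x, x ∈ Ioo (s - min (1/(n+1 : ℝ)) (s/2)) s ∧ x ∈ G := fun n => by
    apply hdense _ _ ?_ ?_ hs.2.le
    · have : min (1/(n+1 : ℝ)) (s/2) ≤ s/2 := min_le_right _ _
      linarith [hs.1]
    · linarith [hεs n]
  have htex : ∀ n : ℕ, ∃ x, x ∈ Ioo t (t + min (1/(n+1 : ℝ)) ((1-t)/2)) ∧ x ∈ G := fun n => by
    apply hdense _ _ (by linarith [hs.1, hst] : (0:ℝ) ≤ t) (by linarith [hεt n])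
    have h6 : min (1/(n+1 : ℝ)) ((1-t)/2) ≤ (1-t)/2 := min_le_right _ _
    linarith [ht.2]
  choose sn hsn hsnG using hsex
  choose tn htn htnG using htex
  have hεs0 : Tendsto (fun n : ℕ => min (1/(n+1 : ℝ)) (s/2)) atTop (nhds 0) := by
    have h5 := tendsto_one_div_add_atTop_nhds_zero_nat (𝕜 := ℝ)
    have := h5.min (tendsto_const_nhds (x := s/2) (f := atTop))
    rwa [min_eq_left (by linarith [hs.1] : (0:ℝ) ≤ s/2)] at this
  have hεt0 : Tendsto (fun n : ℕ => min (1/(n+1 : ℝ)) ((1-t)/2)) atTop (nhds 0) := by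
    have h5 := tendsto_one_div_add_atTop_nhds_zero_nat (𝕜 := ℝ)
    have := h5.min (tendsto_const_nhds (x := (1-t)/2) (f := atTop))
    rwa [min_eq_left (by linarith [ht.2] : (0:ℝ) ≤ (1-t)/2)] at this
  have hsnlim : Tendsto sn atTop (nhds s) := by
    apply tendsto_of_tendsto_of_tendsto_of_le_of_le
      (g := fun n : ℕ => s - min (1/(n+1 : ℝ)) (s/2)) (h := fun _ : ℕ => s)
    · simpa using (tendsto_const_nhds (x := s) (f := atTop)).sub hεs0
    · exact tendsto_const_nhds
    · exact fun n => (hsn n).1.le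
    · exact fun n => (hsn n).2.le
  have htnlim : Tendsto tn atTop (nhds t) := by
    apply tendsto_of_tendsto_of_tendsto_of_le_of_le
      (g := fun _ : ℕ => t) (h := fun n : ℕ => t + min (1/(n+1 : ℝ)) ((1-t)/2))
    · exact tendsto_const_nhds
    · simpa using (tendsto_const_nhds (x := t) (f := atTop)).add hεt0
    · exact fun n => (htn n).1.le
    · exact fun n => (htn n).2.le
  have hzs : Tendsto (fun n => zac (sn n)) atTop (nhds (zac s)) := by
    apply ((hzcont s hs).tendsto).comp
    exact tendsto_nhdsWithin_iff.2 ⟨hsnlim, Eventually.of_forall fun n => hG (hsnG n)⟩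
  have hzt : Tendsto (fun n => zac (tn n)) atTop (nhds (zac t)) := by
    apply ((hzcont t ht).tendsto).comp
    exact tendsto_nhdsWithin_iff.2 ⟨htnlim, Eventually.of_forall fun n => hG (htnG n)⟩
  have hlt : ∀ n, sn n < tn n := fun n => lt_trans (hsn n).2 (lt_trans hst (htn n).1)
  have hP := fun n => hpair (sn n) (hsnG n) (tn n) (htnG n) (hlt n)
  refine ⟨?_, ?_, ?_⟩
  · exact le_of_tendsto_of_tendsto' (hzs.mul (htnlim.sub hsnlim)) tendsto_const_nhds
      (fun n => (hP n).1)
  · exact le_of_tendsto_of_tendsto' tendsto_const_nhds (hzt.mul (htnlim.sub hsnlim))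
      (fun n => (hP n).2.1)
  · exact le_of_tendsto_of_tendsto' ((hzs.mul hzt).mul (htnlim.sub hsnlim))
      (tendsto_const_nhds.mul (hzt.sub hzs)) (fun n => (hP n).2.2)

end Aux5

section Aux6
open MeasureTheory intervalIntegral

set_option maxHeartbeats 1000000 in
lemma aux_expkey {zac : ℝ → ℝ} {l2 : ℝ} (hl2 : 0 < l2)
    (hzcont : ContinuousOn zac (Ioo (0:ℝ) 1))
    (hall : ∀ s ∈ Ioo (0:ℝ) 1, ∀ t ∈ Ioo (0:ℝ) 1, s < t →
      zac s * (t - s) ≤ l2 ∧ -l2 ≤ zac t * (t - s)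
        ∧ zac s * zac t * (t-s) ≤ l2*(zac t - zac s))
    {m p : ℝ} (hm : m ∈ Ioo (0:ℝ) 1) (hp : p ∈ Ioo (0:ℝ) 1) :
    Real.exp (-(1/l2) * ∫ u in m..p, zac u) ≤ (l2 - zac m * (p - m))/l2 := by
  rcases lt_trichotomy m p with hmp | hmp | hmp
  · -- case m < p
    have hIccsub : Icc m p ⊆ Ioo (0:ℝ) 1 := fun u hu =>
      ⟨lt_of_lt_of_le hm.1 hu.1, lt_of_le_of_lt hu.2 hp.2⟩
    have huIcc : uIcc m p = Icc m p := uIcc_of_le hmp.le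
    have ht' : (p+1)/2 ∈ Ioo (0:ℝ) 1 := ⟨by linarith [hp.1], by linarith [hp.2]⟩
    have hpt' : p < (p+1)/2 := by linarith [hp.2]
    have hub := (hall m hm _ ht' (lt_trans hmp hpt')).1
    have hW : ∀ u ∈ Icc m p, 0 < l2 - zac m * (u - m) := by
      intro u hu
      rcases le_or_gt (zac m) 0 with hz | hz
      · nlinarith [mul_nonpos_of_nonpos_of_nonneg hz (sub_nonneg.2 hu.1)]
      · have h5 : zac m * (u - m) < zac m * ((p+1)/2 - m) :=
          mul_lt_mul_of_pos_left (by linarith [hu.2]) hz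
        linarith
    have hWp : 0 < l2 - zac m * (p - m) := hW p (right_mem_Icc.2 hmp.le)
    have hψcont : ContinuousOn (fun u => l2 * zac m / (l2 - zac m * (u - m))) (uIcc m p) := by
      apply ContinuousOn.div continuousOn_const (Continuous.continuousOn (by continuity))
      intro u hu
      exact ne_of_gt (hW u (by rwa [huIcc] at hu))
    have hψint : IntervalIntegrable (fun u => l2 * zac m / (l2 - zac m * (u - m)))
        volume m p := hψcont.intervalIntegrable
    have hzint : IntervalIntegrable zac volume m p :=
      (hzcont.mono (huIcc ▸ hIccsub : uIcc m p ⊆ Ioo (0:ℝ) 1)).intervalIntegrable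
    have hderiv : ∀ u ∈ uIcc m p,
        HasDerivAt (fun v => -l2 * Real.log (l2 - zac m * (v - m)))
          (l2 * zac m / (l2 - zac m * (u - m))) u := by
      intro u hu
      have hWu := hW u (by rwa [huIcc] at hu)
      have hinner : HasDerivAt (fun v => l2 - zac m * (v - m)) (-(zac m)) u := by
        have h1 : HasDerivAt (fun v : ℝ => v - m) 1 u := (hasDerivAt_id u).sub_const m
        have h3 := (h1.const_mul (zac m)).const_sub l2
        simpa using h3
      have h4 := (hinner.log (ne_of_gt hWu)).const_mul (-l2)
      convert h4 using 1
      · rfl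
      · rfl
      · ring
    have hFTC := integral_eq_sub_of_hasDerivAt hderiv hψint
    have hstar : ∀ u ∈ Icc m p, l2 * zac m / (l2 - zac m * (u - m)) ≤ zac u := by
      intro u hu
      have hWu := hW u hu
      rw [div_le_iff₀ hWu]
      rcases hu.1.eq_or_lt with he | hlt
      · rw [← he]
        apply le_of_eq; ring
      · have h3 := (hall m hm u (hIccsub hu) hlt).2.2
        nlinarith [h3]
    have hmono := intervalIntegral.integral_mono_on hmp.le hψint hzint hstar
    have hψval : (∫ u in m..p, l2 * zac m / (l2 - zac m * (u - m)))
        = -l2 * Real.log (l2 - zac m * (p - m)) + l2 * Real.log l2 := by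
      rw [hFTC]
      simp [sub_self]
    have hlog : -(1/l2) * ∫ u in m..p, zac u
        ≤ Real.log ((l2 - zac m * (p - m))/l2) := by
      rw [Real.log_div (ne_of_gt hWp) (ne_of_gt hl2)]
      have h6 : -(1/l2) * ∫ u in m..p, zac u
          ≤ -(1/l2) * ∫ u in m..p, l2 * zac m / (l2 - zac m * (u - m)) := by
        apply mul_le_mul_of_nonpos_left hmono
        have : 0 < 1/l2 := by positivity
        linarith
      rw [hψval] at h6
      calc -(1/l2) * ∫ u in m..p, zac u
          ≤ -(1/l2) * (-l2 * Real.log (l2 - zac m * (p - m)) + l2 * Real.log l2) := h6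
        _ = Real.log (l2 - zac m * (p - m)) - Real.log l2 := by field_simp; ring
    calc Real.exp (-(1/l2) * ∫ u in m..p, zac u)
        ≤ Real.exp (Real.log ((l2 - zac m * (p - m))/l2)) := Real.exp_le_exp.2 hlog
      _ = (l2 - zac m * (p - m))/l2 := Real.exp_log (div_pos hWp hl2)
  · -- case m = p
    rw [← hmp]
    simp only [intervalIntegral.integral_same, mul_zero, sub_self, sub_zero, neg_mul,
      Real.exp_zero]
    rw [div_self (ne_of_gt hl2)]
  · -- case p < m
    have hIccsub : Icc p m ⊆ Ioo (0:ℝ) 1 := fun u hu =>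
      ⟨lt_of_lt_of_le hp.1 hu.1, lt_of_le_of_lt hu.2 hm.2⟩
    have huIcc : uIcc m p = Icc p m := uIcc_of_ge hmp.le
    have hp' : p/2 ∈ Ioo (0:ℝ) 1 := ⟨by linarith [hp.1], by linarith [hp.1, hp.2]⟩
    have hpp' : p/2 < p := by linarith [hp.1]
    have hlb := (hall _ hp' m hm (lt_trans hpp' hmp)).2.1
    have hW : ∀ u ∈ Icc p m, 0 < l2 - zac m * (u - m) := by
      intro u hu
      rcases le_or_gt 0 (zac m) with hz | hz
      · nlinarith [mul_nonneg hz (sub_nonneg.2 hu.2), mul_nonneg hz (sub_nonneg.2 hu.2)]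
      · have h5 : zac m * (m - u) ≥ zac m * (m - p) :=
          mul_le_mul_of_nonpos_left (by linarith [hu.1]) hz.le
        have h6 : zac m * (m - p) > zac m * (m - p/2) :=
          mul_lt_mul_of_neg_left (by linarith [hp.1]) hz
        nlinarith [hlb]
    have hWp : 0 < l2 - zac m * (p - m) := hW p (left_mem_Icc.2 hmp.le)
    have hψcont : ContinuousOn (fun u => l2 * zac m / (l2 - zac m * (u - m))) (uIcc m p) := by
      apply ContinuousOn.div continuousOn_const (Continuous.continuousOn (by continuity))
      intro u hu
      exact ne_of_gt (hW u (by rwa [huIcc] at hu))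
    have hψint : IntervalIntegrable (fun u => l2 * zac m / (l2 - zac m * (u - m)))
        volume m p := hψcont.intervalIntegrable
    have hzint : IntervalIntegrable zac volume m p :=
      (hzcont.mono (huIcc ▸ hIccsub : uIcc m p ⊆ Ioo (0:ℝ) 1)).intervalIntegrable
    have hderiv : ∀ u ∈ uIcc m p,
        HasDerivAt (fun v => -l2 * Real.log (l2 - zac m * (v - m)))
          (l2 * zac m / (l2 - zac m * (u - m))) u := by
      intro u hu
      have hWu := hW u (by rwa [huIcc] at hu)
      have hinner : HasDerivAt (fun v => l2 - zac m * (v - m)) (-(zac m)) u := by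
        have h1 : HasDerivAt (fun v : ℝ => v - m) 1 u := (hasDerivAt_id u).sub_const m
        have h3 := (h1.const_mul (zac m)).const_sub l2
        simpa using h3
      have h4 := (hinner.log (ne_of_gt hWu)).const_mul (-l2)
      convert h4 using 1
      · rfl
      · rfl
      · ring
    have hFTC := integral_eq_sub_of_hasDerivAt hderiv hψint
    have hstar : ∀ u ∈ Icc p m, zac u ≤ l2 * zac m / (l2 - zac m * (u - m)) := by
      intro u hu
      have hWu := hW u hu
      rw [le_div_iff₀ hWu]
      rcases hu.2.eq_or_lt with he | hlt
      · rw [he]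
        apply le_of_eq; ring
      · have h3 := (hall u (hIccsub hu) m hm hlt).2.2
        nlinarith [h3]
    have hmono' := intervalIntegral.integral_mono_on hmp.le hzint.symm hψint.symm hstar
    have hmono : (∫ u in m..p, l2 * zac m / (l2 - zac m * (u - m)))
        ≤ ∫ u in m..p, zac u := by
      have e1 : (∫ u in m..p, zac u) = -∫ u in p..m, zac u :=
        intervalIntegral.integral_symm p m
      have e2 : (∫ u in m..p, l2 * zac m / (l2 - zac m * (u - m)))
          = -∫ u in p..m, l2 * zac m / (l2 - zac m * (u - m)) :=
        intervalIntegral.integral_symm p m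
      rw [e1, e2]
      linarith [hmono']
    have hψval : (∫ u in m..p, l2 * zac m / (l2 - zac m * (u - m)))
        = -l2 * Real.log (l2 - zac m * (p - m)) + l2 * Real.log l2 := by
      rw [hFTC]
      simp [sub_self]
    have hlog : -(1/l2) * ∫ u in m..p, zac u
        ≤ Real.log ((l2 - zac m * (p - m))/l2) := by
      rw [Real.log_div (ne_of_gt hWp) (ne_of_gt hl2)]
      have h6 : -(1/l2) * ∫ u in m..p, zac u
          ≤ -(1/l2) * ∫ u in m..p, l2 * zac m / (l2 - zac m * (u - m)) := by
        apply mul_le_mul_of_nonpos_left hmono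
        have : 0 < 1/l2 := by positivity
        linarith
      rw [hψval] at h6
      calc -(1/l2) * ∫ u in m..p, zac u
          ≤ -(1/l2) * (-l2 * Real.log (l2 - zac m * (p - m)) + l2 * Real.log l2) := h6
        _ = Real.log (l2 - zac m * (p - m)) - Real.log l2 := by field_simp; ring
    calc Real.exp (-(1/l2) * ∫ u in m..p, zac u)
        ≤ Real.exp (Real.log ((l2 - zac m * (p - m))/l2)) := Real.exp_le_exp.2 hlog
      _ = (l2 - zac m * (p - m))/l2 := Real.exp_log (div_pos hWp hl2)

end Aux6

section Aux7
open MeasureTheory intervalIntegral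

lemma aux_uIcc_sub {x y : ℝ} (hx : x ∈ Ioo (0:ℝ) 1) (hy : y ∈ Ioo (0:ℝ) 1) :
    uIcc x y ⊆ Ioo (0:ℝ) 1 := by
  intro u hu
  exact ⟨lt_of_lt_of_le (lt_min hx.1 hy.1) hu.1, lt_of_le_of_lt hu.2 (max_lt hx.2 hy.2)⟩

lemma aux_tangent {zac : ℝ → ℝ} {l2 : ℝ} (hl2 : 0 < l2)
    (hzcont : ContinuousOn zac (Ioo (0:ℝ) 1))
    (hall : ∀ s ∈ Ioo (0:ℝ) 1, ∀ t ∈ Ioo (0:ℝ) 1, s < t →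
      zac s * (t - s) ≤ l2 ∧ -l2 ≤ zac t * (t - s)
        ∧ zac s * zac t * (t-s) ≤ l2*(zac t - zac s))
    {r₀ : ℝ} (hr₀ : r₀ ∈ Ioo (0:ℝ) 1)
    {m p : ℝ} (hm : m ∈ Ioo (0:ℝ) 1) (hp : p ∈ Ioo (0:ℝ) 1) :
    Real.exp (-(1/l2) * ∫ u in r₀..p, zac u)
      ≤ Real.exp (-(1/l2) * ∫ u in r₀..m, zac u)
        + (-(zac m) * Real.exp (-(1/l2) * ∫ u in r₀..m, zac u) / l2) * (p - m) := by
  have h1 : IntervalIntegrable zac volume r₀ m :=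
    (hzcont.mono (aux_uIcc_sub hr₀ hm)).intervalIntegrable
  have h2 : IntervalIntegrable zac volume m p :=
    (hzcont.mono (aux_uIcc_sub hm hp)).intervalIntegrable
  have hsplit : (∫ u in r₀..p, zac u) = (∫ u in r₀..m, zac u) + ∫ u in m..p, zac u :=
    (integral_add_adjacent_intervals h1 h2).symm
  have hexp : Real.exp (-(1/l2) * ∫ u in r₀..p, zac u)
      = Real.exp (-(1/l2) * ∫ u in r₀..m, zac u)
        * Real.exp (-(1/l2) * ∫ u in m..p, zac u) := by
    rw [← Real.exp_add, hsplit]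
    ring_nf
  have hkey := aux_expkey hl2 hzcont hall hm hp
  have hLm : 0 < Real.exp (-(1/l2) * ∫ u in r₀..m, zac u) := Real.exp_pos _
  calc Real.exp (-(1/l2) * ∫ u in r₀..p, zac u)
      = Real.exp (-(1/l2) * ∫ u in r₀..m, zac u)
        * Real.exp (-(1/l2) * ∫ u in m..p, zac u) := hexp
    _ ≤ Real.exp (-(1/l2) * ∫ u in r₀..m, zac u) * ((l2 - zac m * (p - m))/l2) :=
        mul_le_mul_of_nonneg_left hkey hLm.le
    _ = Real.exp (-(1/l2) * ∫ u in r₀..m, zac u)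
        + (-(zac m) * Real.exp (-(1/l2) * ∫ u in r₀..m, zac u) / l2) * (p - m) := by
        field_simp
        ring

end Aux7

/-- If `z_ac` is locally absolutely continuous on `(0,1)` and for a.e. `t ∈ (0,1)` both
`τ ↦ φ_τ(γ_t)` and `τ ↦ φ̄_τ(γ_t)` have second Peano derivative `z_ac(t)` at `τ = t`,
then `L(r) := exp(-(1/ℓ²)·∫_{r₀}^r z_ac(t) dt)` is concave on `(0,1)`. -/
theorem statement12 {X : Type*} [MetricSpace X] [ProperSpace X]
    (hgeo : IsGeodesicSpace X) (φ φc : X → ℝ) (hpair : IsKantorovichPair φ φc)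
    (γ : ℝ → X) (hγ : IsKantorovichGeodesic φ φc γ)
    (hl : 0 < dist (γ 0) (γ 1))
    (zac : ℝ → ℝ)
    (hac : ∃ g : ℝ → ℝ,
      (∀ x ∈ Set.Ioo (0:ℝ) 1, ∀ y ∈ Set.Ioo (0:ℝ) 1,
        IntervalIntegrable g MeasureTheory.volume x y) ∧
      (∀ x ∈ Set.Ioo (0:ℝ) 1, ∀ y ∈ Set.Ioo (0:ℝ) 1,
        zac y = zac x + ∫ u in x..y, g u))
    (hae : ∀ᵐ t ∂((MeasureTheory.volume : MeasureTheory.Measure ℝ).restrict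
        (Set.Ioo (0:ℝ) 1)),
      HasSecondPeanoDerivAt (fun τ => interpPotential φ τ (γ t)) (zac t) t ∧
      HasSecondPeanoDerivAt (fun τ => reversePotential φc τ (γ t)) (zac t) t)
    (r₀ : ℝ) (hr₀ : r₀ ∈ Set.Ioo (0:ℝ) 1) :
    ConcaveOn ℝ (Set.Ioo (0:ℝ) 1)
      (fun r => Real.exp (-(1 / dist (γ 0) (γ 1) ^ 2) * ∫ u in r₀..r, zac u)) := by
  obtain ⟨g, hgint, hgrep⟩ := hac
  have hzcont := aux_zcont hgint hgrep
  have hT : IsCTransform φc φ := hpair.2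
  have hg : IsGeodesic γ := hγ.1
  have hdual : φ (γ 0) + φc (γ 1) = dist (γ 0) (γ 1) ^ 2 / 2 := hγ.2
  have hl2 : 0 < dist (γ 0) (γ 1) ^ 2 := by positivity
  have haeP : ∀ᵐ t ∂((MeasureTheory.volume : MeasureTheory.Measure ℝ).restrict
      (Set.Ioo (0:ℝ) 1)),
      HasSecondPeanoDerivAt (fun τ => interpPotential φ τ (γ t)) (zac t) t :=
    hae.mono fun t h => h.1
  have hdense : ∀ a b : ℝ, 0 ≤ a → a < b → b ≤ 1 → ∃ x, x ∈ Ioo a b ∧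
      x ∈ {x : ℝ | x ∈ Ioo (0:ℝ) 1 ∧
        HasSecondPeanoDerivAt (fun τ => interpPotential φ τ (γ x)) (zac x) x} := by
    intro a b ha hab hb
    obtain ⟨x, hx1, hx2⟩ := aux_dense haeP a b ha hab hb
    exact ⟨x, hx1, hx2⟩
  have hpairG : ∀ s ∈ {x : ℝ | x ∈ Ioo (0:ℝ) 1 ∧
        HasSecondPeanoDerivAt (fun τ => interpPotential φ τ (γ x)) (zac x) x},
      ∀ t ∈ {x : ℝ | x ∈ Ioo (0:ℝ) 1 ∧
        HasSecondPeanoDerivAt (fun τ => interpPotential φ τ (γ x)) (zac x) x}, s < t →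
      zac s * (t - s) ≤ dist (γ 0) (γ 1) ^ 2
        ∧ -(dist (γ 0) (γ 1) ^ 2) ≤ zac t * (t - s)
        ∧ zac s * zac t * (t-s) ≤ dist (γ 0) (γ 1) ^ 2 * (zac t - zac s) := by
    rintro s ⟨hs, hPs⟩ t ⟨ht, hPt⟩ hst
    exact ⟨(aux_zub hT hg hdual hs ht hst hPs hPt).1,
      (aux_zub hT hg hdual hs ht hst hPs hPt).2,
      aux_riccati hT hg hdual hl hs ht hst hPs hPt⟩
  have hall := aux_allpairs hdense hzcont (fun x hx => hx.1) hpairG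
  refine ⟨convex_Ioo 0 1, ?_⟩
  intro x hx y hy a b ha hb hab
  have hmIoo : a • x + b • y ∈ Ioo (0:ℝ) 1 := (convex_Ioo 0 1) hx hy ha hb hab
  simp only [smul_eq_mul] at hmIoo ⊢
  set m := a * x + b * y with hmdef
  have htx := aux_tangent hl2 hzcont hall hr₀ hmIoo hx
  have hty := aux_tangent hl2 hzcont hall hr₀ hmIoo hy
  set L : ℝ → ℝ := fun r => Real.exp (-(1 / dist (γ 0) (γ 1) ^ 2) * ∫ u in r₀..r, zac u)
    with hLdef
  set D : ℝ := -(zac m) * L m / dist (γ 0) (γ 1) ^ 2 with hDdef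
  have htx' : L x ≤ L m + D * (x - m) := htx
  have hty' : L y ≤ L m + D * (y - m) := hty
  show a * L x + b * L y ≤ L m
  have hzero : a * (x - m) + b * (y - m) = 0 := by
    rw [hmdef]
    linear_combination (-(a*x + b*y)) * hab
  have hsum : a * (L m + D * (x - m)) + b * (L m + D * (y - m)) = L m := by
    have e1 : a * (L m + D * (x - m)) + b * (L m + D * (y - m))
        = (a + b) * L m + D * (a * (x - m) + b * (y - m)) := by ring
    rw [e1, hzero, hab]
    ring
  calc a * L x + b * L y
      ≤ a * (L m + D * (x - m)) + b * (L m + D * (y - m)) :=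
        add_le_add (mul_le_mul_of_nonneg_left htx' ha) (mul_le_mul_of_nonneg_left hty' hb)
    _ = L m := hsum
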